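/- Let $R$ be a commutative ring, $D : R \to R$ a derivation, and let $\hat{D}$ denote the coefficientwise extension of $D$ to the Laurent series ring $R((t))$. Fix $\tau \in R((t))$ and define the derivation $\tilde{D} : R((t)) \to R((t))$ by $\tilde{D}f := \hat{D}f + \tau \cdot f'$, where $f'$ is the formal derivative (so $\tilde{D}$ is a lift of $D$, extending it from $R$). Then for all $f, g \in R((t))$: $D\big(\mathrm{Res}(f \cdot g)\big) = \mathrm{Res}\big((\tilde{D}f)\cdot g\big) + \mathrm{Res}\big(f \cdot (\tilde{D}g + g\,\tau')\big)$. In particular, the right-hand side is independent of the choice of $\tau$ (i.e., of the choice of the lift $\tilde{D}$). (Here $g$ represents the relative differential $\alpha = g\,dt$, and $\tilde{D}g + g\tau'$ is its Lie derivative $\tilde{D}\alpha$ along the lift, so this is the identity $D(\mathrm{res}(f\alpha)) = \mathrm{res}((\tilde{D}f)\alpha) + \mathrm{res}(f\,\tilde{D}\alpha)$ for the residue pairing.) -/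

import Mathlib

/-- For a derivation `D` of a commutative ring `R`, its coefficientwise extension `hatD` to
`R((t))` and the lift `tildeD f = hatD f + τ · f'` (for a fixed `τ ∈ R((t))`), the residue
pairing satisfies `D(Res(f·g)) = Res((tildeD f)·g) + Res(f·(tildeD g + g·τ'))`, where the
formal derivative `der` is specified coefficientwise.  (In particular, the right-hand side is
independent of the choice of the lift `τ`.) -/
theorem residue_pairing_derivation
    {R : Type*} [CommRing R]
    (D : R → R)
    (hDadd : ∀ a b : R, D (a + b) = D a + D b)
    (hDmul : ∀ a b : R, D (a * b) = a * D b + D a * b)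
    (hatD : LaurentSeries R → LaurentSeries R)
    (hhatD : ∀ (f : LaurentSeries R) (n : ℤ), (hatD f).coeff n = D (f.coeff n))
    (der : LaurentSeries R → LaurentSeries R)
    (hder : ∀ (f : LaurentSeries R) (n : ℤ), (der f).coeff n = (n + 1) • f.coeff (n + 1))
    (τ : LaurentSeries R) (f g : LaurentSeries R) :
    D ((f * g).coeff (-1)) =
      ((hatD f + τ * der f) * g).coeff (-1) +
        (f * ((hatD g + τ * der g) + g * der τ)).coeff (-1) := by
  -- D is additive, hence D 0 = 0 and D commutes with finite sums
  have hD0 : D 0 = 0 := by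
    have h := hDadd 0 0
    rw [add_zero] at h
    exact (add_eq_left.mp h.symm)
  have hDsum : ∀ (s : Finset (ℤ × ℤ)) (u : ℤ × ℤ → R),
      D (∑ i ∈ s, u i) = ∑ i ∈ s, D (u i) :=
    fun s u => map_sum (AddMonoidHom.mk' D hDadd) u s
  -- the support of hatD x is contained in that of x
  have hsupp : ∀ x : LaurentSeries R, (hatD x).support ⊆ x.support := by
    intro x n hn
    rw [HahnSeries.mem_support] at hn ⊢
    intro h
    apply hn
    rw [hhatD, h, hD0]
  -- Leibniz rule for hatD at each coefficient
  have leib : ∀ (x y : LaurentSeries R) (a : ℤ),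
      D ((x * y).coeff a) = (hatD x * y).coeff a + (x * hatD y).coeff a := by
    intro x y a
    rw [HahnSeries.coeff_mul_left' x.isPWO_support (hsupp x),
      HahnSeries.coeff_mul_right' y.isPWO_support (hsupp y),
      HahnSeries.coeff_mul, hDsum, ← Finset.sum_add_distrib]
    refine Finset.sum_congr rfl fun ij _ => ?_
    rw [hhatD, hhatD, hDmul]
    ring
  -- product rule for the formal derivative
  have der_mul : ∀ x y : LaurentSeries R, der (x * y) = der x * y + x * der y := by
    intro x y
    ext n
    have hmono : Monotone (fun m : ℤ => m - 1) := fun a b h => by simpa using h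
    have hsx : ((fun m : ℤ => m - 1) '' x.support).IsPWO :=
      x.isPWO_support.image_of_monotone hmono
    have hsy : ((fun m : ℤ => m - 1) '' y.support).IsPWO :=
      y.isPWO_support.image_of_monotone hmono
    have hmem : ∀ (z : LaurentSeries R) (m : ℤ),
        m ∈ (fun m : ℤ => m - 1) '' z.support ↔ m + 1 ∈ z.support := by
      intro z m
      constructor
      · rintro ⟨k, hk, rfl⟩
        simpa using hk
      · intro h
        exact ⟨m + 1, h, by ring⟩
    have hsubx : (der x).support ⊆ (fun m : ℤ => m - 1) '' x.support := by
      intro m hm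
      rw [HahnSeries.mem_support, hder] at hm
      rw [hmem]
      rw [HahnSeries.mem_support]
      intro h
      apply hm
      rw [h, smul_zero]
    have hsuby : (der y).support ⊆ (fun m : ℤ => m - 1) '' y.support := by
      intro m hm
      rw [HahnSeries.mem_support, hder] at hm
      rw [hmem]
      rw [HahnSeries.mem_support]
      intro h
      apply hm
      rw [h, smul_zero]
    rw [HahnSeries.coeff_add, HahnSeries.coeff_mul_left' hsx hsubx,
      HahnSeries.coeff_mul_right' hsy hsuby, hder, HahnSeries.coeff_mul, Finset.smul_sum]
    have h1 : ∑ ij ∈ Finset.antidiagonal hsx y.isPWO_support n,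
          (der x).coeff ij.1 * y.coeff ij.2
        = ∑ ij ∈ Finset.antidiagonal x.isPWO_support y.isPWO_support (n + 1),
          (ij.1 • x.coeff ij.1) * y.coeff ij.2 := by
      refine Finset.sum_nbij' (fun ij => (ij.1 + 1, ij.2)) (fun ij => (ij.1 - 1, ij.2))
        ?_ ?_ ?_ ?_ ?_
      · intro a ha
        rw [Finset.mem_antidiagonal] at ha ⊢
        obtain ⟨h1, h2, h3⟩ := ha
        rw [hmem] at h1
        exact ⟨h1, h2, by dsimp only; omega⟩
      · intro a ha
        rw [Finset.mem_antidiagonal] at ha ⊢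
        obtain ⟨h1, h2, h3⟩ := ha
        refine ⟨?_, h2, by dsimp only; omega⟩
        rw [hmem]
        simpa using h1
      · intro a _; simp
      · intro a _; simp
      · intro a _
        simp only [hder]
    have h2 : ∑ ij ∈ Finset.antidiagonal x.isPWO_support hsy n,
          x.coeff ij.1 * (der y).coeff ij.2
        = ∑ ij ∈ Finset.antidiagonal x.isPWO_support y.isPWO_support (n + 1),
          x.coeff ij.1 * (ij.2 • y.coeff ij.2) := by
      refine Finset.sum_nbij' (fun ij => (ij.1, ij.2 + 1)) (fun ij => (ij.1, ij.2 - 1))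
        ?_ ?_ ?_ ?_ ?_
      · intro a ha
        rw [Finset.mem_antidiagonal] at ha ⊢
        obtain ⟨h1, h2, h3⟩ := ha
        rw [hmem] at h2
        exact ⟨h1, h2, by dsimp only; omega⟩
      · intro a ha
        rw [Finset.mem_antidiagonal] at ha ⊢
        obtain ⟨h1, h2, h3⟩ := ha
        refine ⟨h1, ?_, by dsimp only; omega⟩
        rw [hmem]
        simpa using h2
      · intro a _; simp
      · intro a _; simp
      · intro a _
        simp only [hder]
    rw [h1, h2, ← Finset.sum_add_distrib]
    refine Finset.sum_congr rfl fun ij hij => ?_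
    have hsum : ij.1 + ij.2 = n + 1 := (Finset.mem_antidiagonal.mp hij).2.2
    rw [smul_mul_assoc, mul_smul_comm, ← add_smul, hsum]
  -- the residue of a derivative vanishes
  have res_der : ∀ h : LaurentSeries R, (der h).coeff (-1) = 0 := by
    intro h
    rw [hder]
    norm_num
  -- assemble everything
  have key : (hatD f + τ * der f) * g + f * ((hatD g + τ * der g) + g * der τ)
      = (hatD f * g + f * hatD g) + der (τ * (f * g)) := by
    rw [der_mul τ (f * g), der_mul f g]
    ring
  rw [← HahnSeries.coeff_add, key, HahnSeries.coeff_add, res_der, add_zero,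
    HahnSeries.coeff_add, leib]
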